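/- Let m = 2 and C_1, C_2 be nonempty closed convex subsets of X. Then the vector y = (P_{cl(C_2−C_1)}(0), P_{cl(C_1−C_2)}(0)) equals the projection of 0 onto the set 2·cl(Δ − 𝐂) in X², where 𝐂 = C_1 × C_2 and Δ is the diagonal of X². -/

import Mathlib

open scoped RealInnerProductSpace
open Pointwise

theorem stmt14 {X : Type*} [NormedAddCommGroup X] [InnerProductSpace ℝ X] [CompleteSpace X]
    (C₁ C₂ : Set X)
    (hC₁ne : C₁.Nonempty) (hC₁cl : IsClosed C₁) (hC₁cv : Convex ℝ C₁)
    (hC₂ne : C₂.Nonempty) (hC₂cl : IsClosed C₂) (hC₂cv : Convex ℝ C₂)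
    (y₁ y₂ : X)
    (hy₁ : y₁ ∈ closure {w : X | ∃ c₂ ∈ C₂, ∃ c₁ ∈ C₁, w = c₂ - c₁} ∧
      ∀ w ∈ closure {w : X | ∃ c₂ ∈ C₂, ∃ c₁ ∈ C₁, w = c₂ - c₁}, ‖y₁‖ ≤ ‖w‖)
    (hy₂ : y₂ ∈ closure {w : X | ∃ c₁ ∈ C₁, ∃ c₂ ∈ C₂, w = c₁ - c₂} ∧
      ∀ w ∈ closure {w : X | ∃ c₁ ∈ C₁, ∃ c₂ ∈ C₂, w = c₁ - c₂}, ‖y₂‖ ≤ ‖w‖)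
    (Y : PiLp 2 (fun _ : Fin 2 => X)) (hY : Y 0 = y₁ ∧ Y 1 = y₂)
    (S : Set (PiLp 2 (fun _ : Fin 2 => X)))
    (hS : S = {x | ∃ w ∈ closure {w : PiLp 2 (fun _ : Fin 2 => X) |
        ∃ d : PiLp 2 (fun _ : Fin 2 => X), (∃ c : X, ∀ i, d i = c) ∧
        ∃ c : PiLp 2 (fun _ : Fin 2 => X), (c 0 ∈ C₁ ∧ c 1 ∈ C₂) ∧ w = d - c},
      x = (2 : ℝ) • w}) :
    Y ∈ S ∧ ∀ s ∈ S, ‖Y‖ ≤ ‖s‖ := by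
  obtain ⟨hy₁m, hy₁min⟩ := hy₁
  obtain ⟨hy₂m, hy₂min⟩ := hy₂
  obtain ⟨hY0, hY1⟩ := hY
  set A : Set X := {w : X | ∃ c₂ ∈ C₂, ∃ c₁ ∈ C₁, w = c₂ - c₁} with hA
  set B : Set X := {w : X | ∃ c₁ ∈ C₁, ∃ c₂ ∈ C₂, w = c₁ - c₂} with hB
  have hBA : B = -A := by
    ext w
    simp only [Set.mem_neg, hA, hB, Set.mem_setOf_eq]
    constructor
    · rintro ⟨c₁, h1, c₂, h2, rfl⟩; exact ⟨c₂, h2, c₁, h1, by abel⟩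
    · rintro ⟨c₂, h2, c₁, h1, h⟩
      refine ⟨c₁, h1, c₂, h2, ?_⟩
      have : w = -(-w) := by abel
      rw [this, h]; abel
  have hclB : closure B = -closure A := by
    rw [hBA, ← Set.neg_preimage, ← Set.neg_preimage]
    exact ((Homeomorph.neg X).preimage_closure A).symm
  have hny₁ : -y₁ ∈ closure B := by rw [hclB]; simpa using hy₁m
  have hny₁min : ∀ w ∈ closure B, ‖y₁‖ ≤ ‖w‖ := by
    intro w hw
    rw [hclB, Set.mem_neg] at hw
    simpa using hy₁min _ hw
  have hnorm : ‖y₂‖ = ‖y₁‖ :=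
    le_antisymm (by simpa using hy₂min _ hny₁) (hny₁min _ hy₂m)
  have hBcv : Convex ℝ (closure B) := by
    have hBsub : B = C₁ - C₂ := by
      ext w
      simp only [hB, Set.mem_setOf_eq, Set.mem_sub]
      constructor
      · rintro ⟨c₁, h1, c₂, h2, rfl⟩; exact ⟨c₁, h1, c₂, h2, rfl⟩
      · rintro ⟨c₁, h1, c₂, h2, rfl⟩; exact ⟨c₁, h1, c₂, h2, rfl⟩
    rw [hBsub]; exact (hC₁cv.sub hC₂cv).closure
  have hy₂eq : y₂ = -y₁ := by
    have hmid : (1/2 : ℝ) • y₂ + (1/2 : ℝ) • (-y₁) ∈ closure B :=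
      hBcv hy₂m hny₁ (by norm_num) (by norm_num) (by norm_num)
    have h1 : ‖y₂‖ ≤ ‖(1/2 : ℝ) • y₂ + (1/2 : ℝ) • (-y₁)‖ := hy₂min _ hmid
    have hpar := parallelogram_law_with_norm ℝ y₂ (-y₁)
    have h2 : ‖(1/2 : ℝ) • y₂ + (1/2 : ℝ) • (-y₁)‖ = ‖y₂ + -y₁‖ / 2 := by
      rw [← smul_add, norm_smul, Real.norm_eq_abs]
      rw [abs_of_pos (by norm_num : (0:ℝ) < 1/2)]
      ring
    have hneg : ‖(-y₁ : X)‖ = ‖y₁‖ := norm_neg y₁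
    have h3 : ‖y₂ - -y₁‖ ≤ 0 := by
      nlinarith [norm_nonneg (y₂ - -y₁), norm_nonneg (y₂ + -y₁), norm_nonneg y₂]
    have h4 : y₂ + y₁ = 0 := by
      have h5 : y₂ - -y₁ = 0 := norm_eq_zero.mp (le_antisymm h3 (norm_nonneg _))
      rw [← sub_neg_eq_add]; exact h5
    exact eq_neg_of_add_eq_zero_left h4
  -- abbreviations for the product space
  have hPdef : True := trivial
  set T : Set (PiLp 2 (fun _ : Fin 2 => X)) := {w : PiLp 2 (fun _ : Fin 2 => X) |
        ∃ d : PiLp 2 (fun _ : Fin 2 => X), (∃ c : X, ∀ i, d i = c) ∧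
        ∃ c : PiLp 2 (fun _ : Fin 2 => X), (c 0 ∈ C₁ ∧ c 1 ∈ C₂) ∧ w = d - c} with hT
  have hnormP : ∀ x : PiLp 2 (fun _ : Fin 2 => X), ‖x‖ ^ 2 = ‖x 0‖ ^ 2 + ‖x 1‖ ^ 2 := by
    intro x
    rw [PiLp.norm_sq_eq_of_L2, Fin.sum_univ_two]
  have hf : Continuous fun x : PiLp 2 (fun _ : Fin 2 => X) => x 0 - x 1 := by
    have hc := (PiLp.continuousLinearEquiv 2 ℝ (fun _ : Fin 2 => X)).continuous
    exact ((continuous_apply (0 : Fin 2)).comp hc).sub ((continuous_apply (1 : Fin 2)).comp hc)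
  have hDclosed : IsClosed {x : PiLp 2 (fun _ : Fin 2 => X) | x 0 - x 1 ∈ closure A} := (isClosed_closure).preimage hf
  have hTD : closure T ⊆ {x : PiLp 2 (fun _ : Fin 2 => X) | x 0 - x 1 ∈ closure A} := by
    apply closure_minimal _ hDclosed
    rintro w ⟨d, ⟨c, hc⟩, e, ⟨he0, he1⟩, rfl⟩
    have h : (d - e) 0 - (d - e) 1 = e 1 - e 0 := by
      show (d 0 - e 0) - (d 1 - e 1) = e 1 - e 0
      rw [hc 0, hc 1]; abel
    rw [Set.mem_setOf_eq, h]
    exact subset_closure ⟨e 1, he1, e 0, he0, rfl⟩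
  -- membership of Y/2 in closure T
  have hwmem : (1/2 : ℝ) • Y ∈ closure T := by
    rw [Metric.mem_closure_iff]
    intro ε hε
    obtain ⟨a, haA, hay⟩ := Metric.mem_closure_iff.mp hy₁m ε hε
    obtain ⟨c₂, hc₂, c₁, hc₁, rfl⟩ := haA
    set d₀ : PiLp 2 (fun _ : Fin 2 => X) := WithLp.toLp 2 (fun _ : Fin 2 => (1/2 : ℝ) • y₁ + c₁) with hd₀
    set e₀ : PiLp 2 (fun _ : Fin 2 => X) := WithLp.toLp 2 (fun i : Fin 2 => if i = 0 then c₁ else c₂) with he₀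
    set p : PiLp 2 (fun _ : Fin 2 => X) := d₀ - e₀ with hpdef
    have hp0 : p 0 = (1/2 : ℝ) • y₁ := by
      show (1/2 : ℝ) • y₁ + c₁ - (if (0 : Fin 2) = 0 then c₁ else c₂) = (1/2 : ℝ) • y₁
      rw [if_pos rfl]; abel
    have hp1 : p 1 = (1/2 : ℝ) • y₁ + c₁ - c₂ := by
      show (1/2 : ℝ) • y₁ + c₁ - (if (1 : Fin 2) = 0 then c₁ else c₂) = _
      rw [if_neg (by decide)]
    refine ⟨p, ⟨d₀, ⟨(1/2 : ℝ) • y₁ + c₁, fun i => rfl⟩,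
      e₀, ⟨?_, ?_⟩, rfl⟩, ?_⟩
    · show (if (0 : Fin 2) = 0 then c₁ else c₂) ∈ C₁
      rw [if_pos rfl]; exact hc₁
    · show (if (1 : Fin 2) = 0 then c₁ else c₂) ∈ C₂
      rw [if_neg (by decide)]; exact hc₂
    · have hd0 : ((1/2 : ℝ) • Y - p) 0 = 0 := by
        show (1/2 : ℝ) • Y 0 - p 0 = 0
        rw [hY0, hp0, sub_self]
      have hd1 : ((1/2 : ℝ) • Y - p) 1 = (c₂ - c₁) - y₁ := by
        show (1/2 : ℝ) • Y 1 - p 1 = (c₂ - c₁) - y₁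
        rw [hY1, hy₂eq, hp1]
        module
      have hsq : ‖(1/2 : ℝ) • Y - p‖ ^ 2 = ‖(c₂ - c₁) - y₁‖ ^ 2 := by
        rw [hnormP, hd0, hd1]; simp
      have hlt : ‖(c₂ - c₁) - y₁‖ < ε := by
        rw [dist_eq_norm] at hay
        rw [show (c₂ - c₁) - y₁ = -(y₁ - (c₂ - c₁)) by abel, norm_neg]
        exact hay
      rw [dist_eq_norm]
      nlinarith [norm_nonneg ((1/2 : ℝ) • Y - p), norm_nonneg ((c₂ - c₁) - y₁)]
  constructor
  · rw [hS]
    refine ⟨(1/2 : ℝ) • Y, hwmem, ?_⟩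
    rw [smul_smul]; norm_num
  · intro s hs
    rw [hS] at hs
    obtain ⟨w, hw, rfl⟩ := hs
    have hwd := hTD hw
    rw [Set.mem_setOf_eq] at hwd
    have hmin : ‖y₁‖ ≤ ‖w 0 - w 1‖ := hy₁min _ hwd
    have hYsq : ‖Y‖ ^ 2 = ‖y₁‖ ^ 2 + ‖y₂‖ ^ 2 := by rw [hnormP, hY0, hY1]
    have hssq : ‖(2 : ℝ) • w‖ = 2 * ‖w‖ := by
      rw [norm_smul, Real.norm_eq_abs, abs_of_pos (by norm_num : (0:ℝ) < 2)]
    have hwsq : ‖w‖ ^ 2 = ‖w 0‖ ^ 2 + ‖w 1‖ ^ 2 := hnormP w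
    have htri : ‖w 0 - w 1‖ ≤ ‖w 0‖ + ‖w 1‖ := norm_sub_le _ _
    have ha : ‖y₁‖ ^ 2 ≤ ‖w 0 - w 1‖ ^ 2 := by
      nlinarith [norm_nonneg y₁, norm_nonneg (w 0 - w 1)]
    have hb : ‖w 0 - w 1‖ ^ 2 ≤ 2 * ‖w‖ ^ 2 := by
      nlinarith [sq_nonneg (‖w 0‖ - ‖w 1‖), norm_nonneg (w 0 - w 1), norm_nonneg (w 0),
        norm_nonneg (w 1)]
    have hnorm2 : ‖y₂‖ ^ 2 = ‖y₁‖ ^ 2 := by rw [hnorm]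
    have hc : ‖Y‖ ^ 2 ≤ (2 * ‖w‖) ^ 2 := by nlinarith
    rw [hssq]
    nlinarith [norm_nonneg Y, norm_nonneg w]
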